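/- Convergence rate of the stochastic zero-shifting algorithm: fix W₀ ∈ ℝ^D and N ≥ 1. For each sequence of sign vectors s = (s₀, …, s_{N−1}) ∈ ({−1,1}^D)^N define iterates by W₀(s) := W₀ and W_{n+1}(s) := W_n(s) + Δ·(s_n ⊙ F(W_n(s))) − Δ·G(W_n(s)). Then the average over all 2^{DN} sign sequences s of (1/N)·Σ_{n=0}^{N−1} ‖G(W_n(s))‖² is at most (φ(W₀) − φ*)/(N·Δ) + L_q·Δ·q_max². -/

import Mathlib

noncomputable section

open scoped BigOperators RealInnerProductSpace

/-- Coordinatewise (Hadamard) product on Euclidean space. -/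
def had {D : ℕ} (x y : EuclideanSpace ℝ (Fin D)) : EuclideanSpace ℝ (Fin D) :=
  WithLp.toLp 2 (fun d => x d * y d)

/-- The ±1 sign vector associated to a boolean vector. -/
def sgn {D : ℕ} (s : Fin D → Bool) : EuclideanSpace ℝ (Fin D) :=
  WithLp.toLp 2 (fun d => if s d then (1 : ℝ) else -1)

/-- Iterates of the stochastic zero-shifting algorithm driven by the sign
sequence `s` : `W_{n+1} = W_n + Δ·(s_n ⊙ F(W_n)) − Δ·G(W_n)`. -/
def zsIter {D : ℕ} (Δ : ℝ)
    (F G : EuclideanSpace ℝ (Fin D) → EuclideanSpace ℝ (Fin D))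
    (W0 : EuclideanSpace ℝ (Fin D)) (s : ℕ → Fin D → Bool) : ℕ → EuclideanSpace ℝ (Fin D)
  | 0 => W0
  | n + 1 =>
      zsIter Δ F G W0 s n + Δ • had (sgn (s n)) (F (zsIter Δ F G W0 s n))
        - Δ • G (zsIter Δ F G W0 s n)

/-- Extension of a finite sign sequence. -/
def sfN {D : ℕ} (N : ℕ) (s : Fin N → Fin D → Bool) : ℕ → Fin D → Bool :=
  fun k => if h : k < N then s ⟨k, h⟩ else fun _ => true

lemma zs_descent {E : Type*} [NormedAddCommGroup E] [InnerProductSpace ℝ E] [CompleteSpace E]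
    (φ : E → ℝ) (G : E → E) (L : ℝ)
    (hgrad : ∀ W, HasGradientAt φ (G W) W)
    (hLip : ∀ U V, ‖G U - G V‖ ≤ L * ‖U - V‖) (x y : E) :
    φ y ≤ φ x + ⟪G x, y - x⟫ + L / 2 * ‖y - x‖ ^ 2 := by
  set v := y - x with hv
  set g : ℝ → ℝ := fun t => φ (x + t • v) - t * ⟪G x, v⟫ - L / 2 * t ^ 2 * ‖v‖ ^ 2 with hg
  have hline : ∀ t : ℝ, HasDerivAt (fun t : ℝ => x + t • v) v t := by
    intro t
    simpa using ((hasDerivAt_id t).smul_const v).const_add x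
  have hd : ∀ t : ℝ, HasDerivAt g
      (⟪G (x + t • v), v⟫ - ⟪G x, v⟫ - L / 2 * (2 * t) * ‖v‖ ^ 2) t := by
    intro t
    have h1 : HasDerivAt (fun t : ℝ => φ (x + t • v)) (⟪G (x + t • v), v⟫) t := by
      have := ((hgrad (x + t • v)).hasFDerivAt.comp_hasDerivAt t (hline t))
      simp at this; exact this
    have h2 : HasDerivAt (fun t : ℝ => t * ⟪G x, v⟫) (⟪G x, v⟫) t := by
      simpa using (hasDerivAt_id t).mul_const (⟪G x, v⟫)
    have h3 : HasDerivAt (fun t : ℝ => L / 2 * t ^ 2 * ‖v‖ ^ 2)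
        (L / 2 * (2 * t) * ‖v‖ ^ 2) t := by
      have := ((hasDerivAt_pow 2 t).const_mul (L / 2)).mul_const (‖v‖ ^ 2)
      simpa [mul_comm, mul_assoc, mul_left_comm] using this
    exact (h1.sub h2).sub h3
  have hanti : AntitoneOn g (Set.Icc (0:ℝ) 1) := by
    apply antitoneOn_of_deriv_nonpos (convex_Icc 0 1)
    · exact fun t _ => ((hd t).differentiableAt).continuousAt.continuousWithinAt
    · intro t _
      exact ((hd t).differentiableAt).differentiableWithinAt
    · intro t ht
      rw [(hd t).deriv]
      rw [interior_Icc] at ht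
      have hb : ⟪G (x + t • v) - G x, v⟫ ≤ L * t * ‖v‖ ^ 2 := by
        calc ⟪G (x + t • v) - G x, v⟫ ≤ ‖G (x + t • v) - G x‖ * ‖v‖ :=
              real_inner_le_norm _ _
          _ ≤ (L * ‖(x + t • v) - x‖) * ‖v‖ := by
              gcongr; exact hLip _ _
          _ = L * t * ‖v‖ ^ 2 := by
              rw [add_sub_cancel_left, norm_smul]
              simp [abs_of_pos ht.1]; ring
      have heq : ⟪G (x + t • v), v⟫ - ⟪G x, v⟫ = ⟪G (x + t • v) - G x, v⟫ := by
        rw [inner_sub_left]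
      rw [heq]
      nlinarith [hb]
  have h01 := hanti (Set.left_mem_Icc.2 one_pos.le) (Set.right_mem_Icc.2 one_pos.le) one_pos.le
  simp only [hg] at h01
  simp only [zero_smul, add_zero, zero_mul, sub_zero, zero_pow, mul_zero, ne_eq] at h01
  have h1 : x + (1:ℝ) • v = y := by rw [one_smul, hv]; abel
  rw [h1] at h01
  nlinarith [h01]

lemma euc_norm_sq {D : ℕ} (x : EuclideanSpace ℝ (Fin D)) : ‖x‖ ^ 2 = ∑ d, x d ^ 2 := by
  rw [EuclideanSpace.norm_eq, Real.sq_sqrt (by positivity)]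
  simp [sq_abs]

lemma zsIter_congr {D : ℕ} (Δ : ℝ)
    (F G : EuclideanSpace ℝ (Fin D) → EuclideanSpace ℝ (Fin D))
    (W0 : EuclideanSpace ℝ (Fin D)) (s t : ℕ → Fin D → Bool) :
    ∀ n, (∀ k, k < n → s k = t k) → zsIter Δ F G W0 s n = zsIter Δ F G W0 t n
  | 0, _ => rfl
  | n + 1, h => by
    have ih := zsIter_congr Δ F G W0 s t n (fun k hk => h k (Nat.lt_succ_of_lt hk))
    simp only [zsIter, ih, h n (Nat.lt_succ_self n)]

theorem zero_shifting_convergence_rate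
    (D : ℕ) (hD : 1 ≤ D) (Δ qmax Lq : ℝ) (hΔ : 0 < Δ) (hq : 0 < qmax) (hLq : 0 < Lq)
    (Qp Qm : EuclideanSpace ℝ (Fin D) → EuclideanSpace ℝ (Fin D))
    (hQp : ∀ W, ‖Qp W‖ ≤ qmax) (hQm : ∀ W, ‖Qm W‖ ≤ qmax)
    (F G : EuclideanSpace ℝ (Fin D) → EuclideanSpace ℝ (Fin D))
    (hF : ∀ W, F W = (1 / 2 : ℝ) • (Qm W + Qp W))
    (hG : ∀ W, G W = (1 / 2 : ℝ) • (Qm W - Qp W))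
    (φ : EuclideanSpace ℝ (Fin D) → ℝ) (φstar : ℝ)
    (hgrad : ∀ W, HasGradientAt φ (G W) W)
    (hgradLip : ∀ U V, ‖G U - G V‖ ≤ Lq * ‖U - V‖)
    (hlb : ∀ W, φstar ≤ φ W)
    (W0 : EuclideanSpace ℝ (Fin D)) (N : ℕ) (hN : 1 ≤ N) :
    ((2 : ℝ) ^ (D * N))⁻¹ * ∑ s : Fin N → Fin D → Bool,
        (N : ℝ)⁻¹ * ∑ n ∈ Finset.range N,
          ‖G (zsIter Δ F G W0
                (fun k => if h : k < N then s ⟨k, h⟩ else fun _ => true) n)‖ ^ 2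
      ≤ (φ W0 - φstar) / (N * Δ) + Lq * Δ * qmax ^ 2 := by
  have hLq0 : (0:ℝ) ≤ Lq := hLq.le
  set W : (Fin N → Fin D → Bool) → ℕ → EuclideanSpace ℝ (Fin D) :=
    fun s n => zsIter Δ F G W0 (sfN N s) n with hW
  set X : (Fin N → Fin D → Bool) → ℕ → ℝ :=
    fun s n => ⟪G (W s n), had (sgn (sfN N s n)) (F (W s n))⟫ with hX
  -- componentwise bound on the displacement direction
  have hbound : ∀ (b : Fin D → Bool) (V : EuclideanSpace ℝ (Fin D)),
      ‖had (sgn b) (F V) - G V‖ ^ 2 ≤ 2 * qmax ^ 2 := by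
    intro b V
    rw [euc_norm_sq]
    have h1 : ∀ d, (had (sgn b) (F V) - G V) d ^ 2 ≤ Qp V d ^ 2 + Qm V d ^ 2 := by
      intro d
      have hc : (had (sgn b) (F V) - G V) d
          = (if b d then (1:ℝ) else -1) * F V d - G V d := by
        simp [had, sgn]
      have hFd : F V d = (1/2 : ℝ) * (Qm V d + Qp V d) := by rw [hF]; simp; ring
      have hGd : G V d = (1/2 : ℝ) * (Qm V d - Qp V d) := by rw [hG]; simp
      rw [hc, hFd, hGd]
      cases hb : b d <;> simp <;> nlinarith [sq_nonneg (Qp V d), sq_nonneg (Qm V d)]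
    calc ∑ d, (had (sgn b) (F V) - G V) d ^ 2
        ≤ ∑ d, (Qp V d ^ 2 + Qm V d ^ 2) := Finset.sum_le_sum (fun d _ => h1 d)
      _ = ‖Qp V‖ ^ 2 + ‖Qm V‖ ^ 2 := by
          rw [Finset.sum_add_distrib, euc_norm_sq, euc_norm_sq]
      _ ≤ 2 * qmax ^ 2 := by
          nlinarith [hQp V, hQm V, norm_nonneg (Qp V), norm_nonneg (Qm V)]
  -- the per-step inequality
  have hstep : ∀ (s : Fin N → Fin D → Bool) (n : ℕ),
      Δ * ‖G (W s n)‖ ^ 2 ≤ φ (W s n) - φ (W s (n+1)) + Δ * X s n + Lq * Δ ^ 2 * qmax ^ 2 := by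
    intro s n
    have hy : W s (n+1) - W s n
        = Δ • (had (sgn (sfN N s n)) (F (W s n)) - G (W s n)) := by
      show zsIter Δ F G W0 (sfN N s) (n+1) - zsIter Δ F G W0 (sfN N s) n = _
      simp only [zsIter, smul_sub]
      abel
    have hd := zs_descent φ G Lq hgrad hgradLip (W s n) (W s (n+1))
    rw [hy] at hd
    have hinner : ⟪G (W s n), Δ • (had (sgn (sfN N s n)) (F (W s n)) - G (W s n))⟫
        = Δ * (X s n - ‖G (W s n)‖ ^ 2) := by
      rw [real_inner_smul_right, inner_sub_right, real_inner_self_eq_norm_sq]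
    have hnorm : ‖Δ • (had (sgn (sfN N s n)) (F (W s n)) - G (W s n))‖ ^ 2
        ≤ Δ ^ 2 * (2 * qmax ^ 2) := by
      rw [norm_smul]
      have := hbound (sfN N s n) (W s n)
      have h2 : ‖(Δ:ℝ)‖ ^ 2 = Δ ^ 2 := by rw [Real.norm_eq_abs, sq_abs]
      rw [mul_pow, h2]
      nlinarith [sq_nonneg Δ]
    rw [hinner] at hd
    nlinarith [hd, hnorm]
  -- per-sequence telescoped inequality
  have hper : ∀ s : Fin N → Fin D → Bool,
      Δ * ∑ n ∈ Finset.range N, ‖G (W s n)‖ ^ 2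
        ≤ (φ W0 - φstar) + Δ * ∑ n ∈ Finset.range N, X s n
          + N * (Lq * Δ ^ 2 * qmax ^ 2) := by
    intro s
    have hsum := Finset.sum_le_sum (fun n (_ : n ∈ Finset.range N) => hstep s n)
    have htel : ∑ n ∈ Finset.range N, (φ (W s n) - φ (W s (n+1)))
        = φ (W s 0) - φ (W s N) := Finset.sum_range_sub' (fun n => φ (W s n)) N
    have hW0 : W s 0 = W0 := rfl
    have hφN : φstar ≤ φ (W s N) := hlb _
    rw [Finset.mul_sum]
    calc ∑ n ∈ Finset.range N, Δ * ‖G (W s n)‖ ^ 2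
        ≤ ∑ n ∈ Finset.range N,
            (φ (W s n) - φ (W s (n+1)) + Δ * X s n + Lq * Δ ^ 2 * qmax ^ 2) := hsum
      _ = (φ (W s 0) - φ (W s N)) + Δ * ∑ n ∈ Finset.range N, X s n
            + N * (Lq * Δ ^ 2 * qmax ^ 2) := by
          rw [Finset.sum_add_distrib, Finset.sum_add_distrib, htel, ← Finset.mul_sum,
            Finset.sum_const, Finset.card_range, nsmul_eq_mul]
      _ ≤ (φ W0 - φstar) + Δ * ∑ n ∈ Finset.range N, X s n
            + N * (Lq * Δ ^ 2 * qmax ^ 2) := by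
          rw [hW0]; linarith [hφN]
  -- zero mean of the stochastic term
  have hzero : ∀ n, n < N → ∑ s : Fin N → Fin D → Bool, X s n = 0 := by
    intro n hn
    set i : Fin N := ⟨n, hn⟩ with hi
    set flip : (Fin N → Fin D → Bool) → (Fin N → Fin D → Bool) :=
      fun s j => if j = i then (fun d => ! s i d) else s j with hflip
    have hinv : Function.Involutive flip := by
      intro s; funext j d
      by_cases hj : j = i <;> simp [hflip, hj]
    have hWflip : ∀ s, W (flip s) n = W s n := by
      intro s
      apply zsIter_congr
      intro k hk
      have hkN : k < N := hk.trans hn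
      have : (⟨k, hkN⟩ : Fin N) ≠ i := by
        simp [hi, Fin.ext_iff]; omega
      simp [sfN, hkN, hflip, this]
    have hsgn : ∀ s : Fin N → Fin D → Bool, sgn (sfN N (flip s) n) = - sgn (sfN N s n) := by
      intro s
      have h1 : sfN N (flip s) n = fun d => ! s i d := by simp [sfN, hn, hflip, hi]
      have h2 : sfN N s n = s i := by simp [sfN, hn, hi]
      rw [h1, h2]
      ext d
      cases hs : s i d <;> simp [sgn, hs]
    have hXflip : ∀ s, X (flip s) n = - X s n := by
      intro s
      simp only [hX, hWflip s, hsgn s]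
      have : had (-sgn (sfN N s n)) (F (W s n)) = - had (sgn (sfN N s n)) (F (W s n)) := by
        ext d; simp [had]
      rw [this, inner_neg_right]
    have hb := Fintype.sum_bijective flip hinv.bijective
      (fun s => X (flip s) n) (fun s => X s n) (fun s => rfl)
    have : ∑ s : Fin N → Fin D → Bool, X s n
        = - ∑ s : Fin N → Fin D → Bool, X s n := by
      conv_lhs => rw [← hb]
      rw [← Finset.sum_neg_distrib]
      exact Finset.sum_congr rfl (fun s _ => hXflip s)
    linarith [this]
  -- summing over all sign sequences
  set S : ℝ := ∑ s : Fin N → Fin D → Bool, ∑ n ∈ Finset.range N, ‖G (W s n)‖ ^ 2 with hS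
  have hcard : (Fintype.card (Fin N → Fin D → Bool) : ℝ) = 2 ^ (D * N) := by
    simp [Fintype.card_fun, ← pow_mul, mul_comm]
  have hXsum : ∑ s : Fin N → Fin D → Bool, ∑ n ∈ Finset.range N, X s n = 0 := by
    rw [Finset.sum_comm]
    refine Finset.sum_eq_zero (fun n hnn => ?_)
    exact hzero n (Finset.mem_range.mp hnn)
  have hmain : Δ * S ≤ 2 ^ (D * N) * ((φ W0 - φstar) + N * (Lq * Δ ^ 2 * qmax ^ 2)) := by
    have := Finset.sum_le_sum (fun s (_ : s ∈ (Finset.univ : Finset (Fin N → Fin D → Bool))) => hper s)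
    rw [← Finset.mul_sum] at this
    rw [Finset.sum_add_distrib, Finset.sum_add_distrib, ← Finset.mul_sum, hXsum,
      mul_zero, add_zero, Finset.sum_const, Finset.sum_const, Finset.card_univ,
      nsmul_eq_mul, nsmul_eq_mul, hcard] at this
    rw [hS]
    linarith [this]
  have hSnonneg : 0 ≤ S := by
    apply Finset.sum_nonneg; intro s _
    apply Finset.sum_nonneg; intro n _
    positivity
  have hC : (0:ℝ) < 2 ^ (D * N) := by positivity
  have hNR : (0:ℝ) < N := by exact_mod_cast hN
  have hgoal : ((2:ℝ) ^ (D * N))⁻¹ * ((N:ℝ)⁻¹ * S)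
      ≤ (φ W0 - φstar) / (N * Δ) + Lq * Δ * qmax ^ 2 := by
    have hS' : S ≤ 2 ^ (D * N) * ((φ W0 - φstar) + N * (Lq * Δ ^ 2 * qmax ^ 2)) / Δ := by
      rw [le_div_iff₀ hΔ]
      linarith [hmain]
    calc ((2:ℝ) ^ (D * N))⁻¹ * ((N:ℝ)⁻¹ * S)
        ≤ ((2:ℝ) ^ (D * N))⁻¹ * ((N:ℝ)⁻¹ *
            (2 ^ (D * N) * ((φ W0 - φstar) + N * (Lq * Δ ^ 2 * qmax ^ 2)) / Δ)) := by
          gcongr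
      _ = (φ W0 - φstar) / (N * Δ) + Lq * Δ * qmax ^ 2 := by
          field_simp
  calc ((2 : ℝ) ^ (D * N))⁻¹ * ∑ s : Fin N → Fin D → Bool,
        (N : ℝ)⁻¹ * ∑ n ∈ Finset.range N,
          ‖G (zsIter Δ F G W0
                (fun k => if h : k < N then s ⟨k, h⟩ else fun _ => true) n)‖ ^ 2
      = ((2:ℝ) ^ (D * N))⁻¹ * ((N:ℝ)⁻¹ * S) := by
        rw [← Finset.mul_sum, hS]
        rfl
    _ ≤ _ := hgoal
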